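/- Fidelity formula for swapping noisy states: let ρ_k = p|Ψ₀₀⟩⟨Ψ₀₀| + (1−p)σ_k (k=1,2) with fidelity F = ⟨Ψ₀₀|ρ_k|Ψ₀₀⟩. Then for each Bell measurement outcome ij, the postselected outcome probability is p'_ij = p/2 − p²/4 + (1−p)² p̃'_ij and the postselected fidelity is F'_ij = (2pF − p² + 4(1−p)² p̃'_ij F̃'_ij)/(2p − p² + 4(1−p)² p̃'_ij), where p̃'_ij and F̃'_ij are the corresponding swap probability and fidelity when swapping σ₁⊗σ₂. -/

import Mathlib

open Matrix Kronecker BigOperators ComplexOrder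

noncomputable section

/-- Pauli X matrix. -/
def PX : Matrix (Fin 2) (Fin 2) ℂ := !![0, 1; 1, 0]

/-- Pauli Y matrix. -/
def PY : Matrix (Fin 2) (Fin 2) ℂ := !![0, -Complex.I; Complex.I, 0]

/-- Pauli Z matrix. -/
def PZ : Matrix (Fin 2) (Fin 2) ℂ := !![1, 0; 0, -1]

/-- The maximally entangled two-qubit state (|00⟩+|11⟩)/√2, as a vector. -/
def bell00 : Fin 2 × Fin 2 → ℂ := fun p => if p.1 = p.2 then ((1 / Real.sqrt 2 : ℝ) : ℂ) else 0

/-- The Bell basis vector |Ψ_ij⟩ = (I ⊗ X^i Z^j)|Ψ₀₀⟩. -/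
def bell (i j : Fin 2) : Fin 2 × Fin 2 → ℂ :=
  (((1 : Matrix (Fin 2) (Fin 2) ℂ) ⊗ₖ (PX ^ (i : ℕ) * PZ ^ (j : ℕ)))).mulVec bell00

/-- The inner product ⟨φ|M|ψ⟩. -/
def braket2 {n : Type*} [Fintype n] (φ : n → ℂ) (M : Matrix n n ℂ) (ψ : n → ℂ) : ℂ :=
  star φ ⬝ᵥ M.mulVec ψ

/-- A density matrix: positive semidefinite with unit trace. -/
def IsDensity {n : Type*} [Fintype n] (ρ : Matrix n n ℂ) : Prop :=
  ρ.PosSemidef ∧ ρ.trace = 1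

/-- The Bell-diagonal twirl B(ρ). -/
def twirl (ρ : Matrix (Fin 2 × Fin 2) (Fin 2 × Fin 2) ℂ) :
    Matrix (Fin 2 × Fin 2) (Fin 2 × Fin 2) ℂ :=
  (1 / 4 : ℂ) • (ρ + (PX ⊗ₖ PX) * ρ * (PX ⊗ₖ PX)ᴴ + (PY ⊗ₖ PY) * ρ * (PY ⊗ₖ PY)ᴴ
    + (PZ ⊗ₖ PZ) * ρ * (PZ ⊗ₖ PZ)ᴴ)

/-- The Bell projector |Ψ_ij⟩⟨Ψ_ij|. -/
def bproj (i j : Fin 2) : Matrix (Fin 2 × Fin 2) (Fin 2 × Fin 2) ℂ :=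
  vecMulVec (bell i j) (star (bell i j))

/-- Partial inner product ⟨ψ|_{A₁A₂} M |ψ⟩_{A₁A₂} of a vector ψ on the middle registers
A₁,A₂ with an operator M on registers (B₁,A₁),(A₂,B₂), giving a matrix on B₁,B₂. -/
def swapProj (ψ : Fin 2 × Fin 2 → ℂ)
    (M : Matrix ((Fin 2 × Fin 2) × (Fin 2 × Fin 2)) ((Fin 2 × Fin 2) × (Fin 2 × Fin 2)) ℂ) :
    Matrix (Fin 2 × Fin 2) (Fin 2 × Fin 2) ℂ :=
  fun p q => ∑ a₁, ∑ a₂, ∑ a₁', ∑ a₂',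
    star (ψ (a₁, a₂)) * M ((p.1, a₁), (a₂, p.2)) ((q.1, a₁'), (a₂', q.2)) * ψ (a₁', a₂')

/-- The probability of Bell-measurement outcome ij on the middle registers:
p'_ij(M) = Tr[|Ψ_ij⟩⟨Ψ_ij|_{A₁A₂} M]. -/
def swapProb (i j : Fin 2)
    (M : Matrix ((Fin 2 × Fin 2) × (Fin 2 × Fin 2)) ((Fin 2 × Fin 2) × (Fin 2 × Fin 2)) ℂ) : ℂ :=
  (swapProj (bell i j) M).trace

/-- Tr[|Ψ_ij⟩⟨Ψ_ij|_{B₁B₂} |Ψ_ij⟩⟨Ψ_ij|_{A₁A₂} M]. -/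
def swapNum (i j : Fin 2)
    (M : Matrix ((Fin 2 × Fin 2) × (Fin 2 × Fin 2)) ((Fin 2 × Fin 2) × (Fin 2 × Fin 2)) ℂ) : ℂ :=
  braket2 (bell i j) (swapProj (bell i j) M) (bell i j)

/-- The postselected end-to-end fidelity F'_ij. -/
def swapFid (i j : Fin 2)
    (M : Matrix ((Fin 2 × Fin 2) × (Fin 2 × Fin 2)) ((Fin 2 × Fin 2) × (Fin 2 × Fin 2)) ℂ) : ℂ :=
  swapNum i j M / swapProb i j M


section Aux

set_option maxHeartbeats 2000000

private lemma aux_c2 : (((1 / Real.sqrt 2 : ℝ) : ℂ)) ^ 2 = 1 / 2 := by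
  have h : (Real.sqrt 2) ^ 2 = 2 := Real.sq_sqrt (by norm_num)
  have h2 : ((1 / Real.sqrt 2 : ℝ)) ^ 2 = 1 / 2 := by rw [div_pow, h]; norm_num
  calc (((1 / Real.sqrt 2 : ℝ) : ℂ)) ^ 2 = (((1 / Real.sqrt 2 : ℝ) ^ 2 : ℝ) : ℂ) := by
        push_cast; ring
    _ = 1 / 2 := by rw [h2]; norm_num

private lemma aux_c2' : (((Real.sqrt 2 : ℝ) : ℂ))⁻¹ ^ 2 = 1 / 2 := by
  have h2 : (Real.sqrt 2) ^ 2 = 2 := Real.sq_sqrt (by norm_num)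
  have h : ((Real.sqrt 2 : ℝ) : ℂ) ^ 2 = 2 := by
    calc ((Real.sqrt 2 : ℝ) : ℂ) ^ 2 = ((Real.sqrt 2 ^ 2 : ℝ) : ℂ) := by push_cast; ring
      _ = 2 := by rw [h2]; norm_num
  rw [inv_pow, h]
  norm_num

private lemma aux_hcr :
    (starRingEnd ℂ) ((1 / Real.sqrt 2 : ℝ) : ℂ) = ((1 / Real.sqrt 2 : ℝ) : ℂ) :=
  Complex.conj_ofReal _

private lemma bell_eq (i j : Fin 2) : bell i j = fun p =>
    ((1 / Real.sqrt 2 : ℝ) : ℂ) * ((PX ^ (i : ℕ) * PZ ^ (j : ℕ)) p.2 p.1) := by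
  funext p
  simp [bell, bell00, Matrix.mulVec, dotProduct, Fintype.sum_prod_type, Fin.sum_univ_two,
    Matrix.kroneckerMap_apply, Matrix.one_apply]
  fin_cases p <;> simp <;> ring

private lemma bell00_eq : bell 0 0 = bell00 := by
  funext p
  simp [bell, PX, PZ, Matrix.mulVec, dotProduct, Fintype.sum_prod_type, Fin.sum_univ_two,
    Matrix.kroneckerMap_apply, Matrix.one_apply, bell00]

private lemma bproj00_apply (x y : Fin 2 × Fin 2) :
    bproj 0 0 x y = bell00 x * bell00 y := by
  simp [bproj, bell00_eq, vecMulVec_apply, bell00]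
  split <;> split <;> simp [Complex.conj_ofReal]

private lemma swapProj_PL (ψ : Fin 2 × Fin 2 → ℂ) (σ : Matrix (Fin 2 × Fin 2) (Fin 2 × Fin 2) ℂ) :
    swapProj ψ (bproj 0 0 ⊗ₖ σ) = fun p q =>
      (1 / 2 : ℂ) * ∑ a, ∑ b, star (ψ (p.1, a)) * σ (a, p.2) (b, q.2) * ψ (q.1, b) := by
  have h := aux_c2
  funext p q
  simp only [swapProj, Matrix.kroneckerMap_apply, bproj00_apply, bell00]
  fin_cases p <;> fin_cases q <;>
  · simp [Fin.sum_univ_two]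
    ring_nf
    rw [show ((Real.sqrt 2 : ℝ) : ℂ)⁻¹ ^ 2 = 1 / 2 from aux_c2']
    ring

private lemma swapProj_LP (ψ : Fin 2 × Fin 2 → ℂ) (σ : Matrix (Fin 2 × Fin 2) (Fin 2 × Fin 2) ℂ) :
    swapProj ψ (σ ⊗ₖ bproj 0 0) = fun p q =>
      (1 / 2 : ℂ) * ∑ a, ∑ b, star (ψ (a, p.2)) * σ (p.1, a) (q.1, b) * ψ (b, q.2) := by
  have h := aux_c2
  funext p q
  simp only [swapProj, Matrix.kroneckerMap_apply, bproj00_apply, bell00]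
  fin_cases p <;> fin_cases q <;>
  · simp [Fin.sum_univ_two]
    ring_nf
    rw [show ((Real.sqrt 2 : ℝ) : ℂ)⁻¹ ^ 2 = 1 / 2 from aux_c2']
    ring

private lemma swapProb_PL (i j : Fin 2) (σ : Matrix (Fin 2 × Fin 2) (Fin 2 × Fin 2) ℂ) :
    swapProb i j (bproj 0 0 ⊗ₖ σ) = σ.trace / 4 := by
  have h2 := aux_c2
  have hcr := aux_hcr
  set c := ((1 / Real.sqrt 2 : ℝ) : ℂ) with hc
  fin_cases i <;> fin_cases j <;>
  · simp only [swapProb, swapProj_PL, bell_eq, ← hc, Matrix.trace, Matrix.diag,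
      Fintype.sum_prod_type, Fin.sum_univ_two, PX, PZ, pow_zero, pow_one,
      Matrix.mul_apply, Matrix.one_apply, Matrix.cons_val', Matrix.cons_val_zero,
      Matrix.cons_val_one, Matrix.head_cons, Matrix.head_fin_const, Matrix.empty_val',
      Matrix.cons_val_fin_one, star_mul', RCLike.star_def, hcr]
    simp [Matrix.one_apply, hcr]
    ring_nf
    try simp only [hcr]
    try ring_nf
    try simp only [h2]
    try ring

private lemma swapProb_LP (i j : Fin 2) (σ : Matrix (Fin 2 × Fin 2) (Fin 2 × Fin 2) ℂ) :
    swapProb i j (σ ⊗ₖ bproj 0 0) = σ.trace / 4 := by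
  have h2 := aux_c2
  have hcr := aux_hcr
  set c := ((1 / Real.sqrt 2 : ℝ) : ℂ) with hc
  fin_cases i <;> fin_cases j <;>
  · simp only [swapProb, swapProj_LP, bell_eq, ← hc, Matrix.trace, Matrix.diag,
      Fintype.sum_prod_type, Fin.sum_univ_two, PX, PZ, pow_zero, pow_one,
      Matrix.mul_apply, Matrix.one_apply, Matrix.cons_val', Matrix.cons_val_zero,
      Matrix.cons_val_one, Matrix.head_cons, Matrix.head_fin_const, Matrix.empty_val',
      Matrix.cons_val_fin_one, star_mul', RCLike.star_def, hcr]
    simp [Matrix.one_apply, hcr]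
    ring_nf
    try simp only [hcr]
    try ring_nf
    try simp only [h2]
    try ring

private lemma swapNum_PL (i j : Fin 2) (σ : Matrix (Fin 2 × Fin 2) (Fin 2 × Fin 2) ℂ) :
    swapNum i j (bproj 0 0 ⊗ₖ σ) = braket2 (bell 0 0) σ (bell 0 0) / 4 := by
  have h2 := aux_c2
  have hcr := aux_hcr
  set c := ((1 / Real.sqrt 2 : ℝ) : ℂ) with hc
  have h4 : c ^ 4 = 1 / 4 := by
    have e : c ^ 4 = (c ^ 2) ^ 2 := by ring
    rw [e, h2]; norm_num
  fin_cases i <;> fin_cases j <;>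
  · simp only [swapNum, swapProj_PL, braket2, Matrix.mulVec, dotProduct, bell_eq, ← hc,
      Fintype.sum_prod_type, Fin.sum_univ_two, PX, PZ, pow_zero, pow_one,
      Matrix.mul_apply, Matrix.one_apply, Matrix.cons_val', Matrix.cons_val_zero,
      Matrix.cons_val_one, Matrix.head_cons, Matrix.head_fin_const, Matrix.empty_val',
      Matrix.cons_val_fin_one, star_mul', RCLike.star_def, hcr, Pi.star_apply]
    simp [Matrix.one_apply, hcr]
    ring_nf
    try simp only [hcr]
    try ring_nf
    try simp only [h2, h4]
    try ring

private lemma swapNum_LP (i j : Fin 2) (σ : Matrix (Fin 2 × Fin 2) (Fin 2 × Fin 2) ℂ) :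
    swapNum i j (σ ⊗ₖ bproj 0 0) = braket2 (bell 0 0) σ (bell 0 0) / 4 := by
  have h2 := aux_c2
  have hcr := aux_hcr
  set c := ((1 / Real.sqrt 2 : ℝ) : ℂ) with hc
  have h4 : c ^ 4 = 1 / 4 := by
    have e : c ^ 4 = (c ^ 2) ^ 2 := by ring
    rw [e, h2]; norm_num
  fin_cases i <;> fin_cases j <;>
  · simp only [swapNum, swapProj_LP, braket2, Matrix.mulVec, dotProduct, bell_eq, ← hc,
      Fintype.sum_prod_type, Fin.sum_univ_two, PX, PZ, pow_zero, pow_one,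
      Matrix.mul_apply, Matrix.one_apply, Matrix.cons_val', Matrix.cons_val_zero,
      Matrix.cons_val_one, Matrix.head_cons, Matrix.head_fin_const, Matrix.empty_val',
      Matrix.cons_val_fin_one, star_mul', RCLike.star_def, hcr, Pi.star_apply]
    simp [Matrix.one_apply, hcr]
    ring_nf
    try simp only [hcr]
    try ring_nf
    try simp only [h2, h4]
    try ring

private lemma trace_bproj : (bproj 0 0).trace = 1 := by
  have h2 := aux_c2
  simp only [Matrix.trace, Matrix.diag, bproj00_apply, bell00, Fintype.sum_prod_type,
    Fin.sum_univ_two]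
  simp
  ring_nf
  rw [show ((Real.sqrt 2 : ℝ) : ℂ)⁻¹ ^ 2 = 1 / 2 from aux_c2']
  ring

private lemma braket_bproj : braket2 (bell 0 0) (bproj 0 0) (bell 0 0) = 1 := by
  have h2 := aux_c2
  simp only [braket2, Matrix.mulVec, dotProduct, bproj00_apply, bell00_eq, bell00,
    Fintype.sum_prod_type, Fin.sum_univ_two, Pi.star_apply, RCLike.star_def, aux_hcr]
  simp [aux_hcr]
  ring_nf
  have h4 : ((Real.sqrt 2 : ℝ) : ℂ)⁻¹ ^ 4 = 1 / 4 := by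
    have e : ((Real.sqrt 2 : ℝ) : ℂ)⁻¹ ^ 4 = (((Real.sqrt 2 : ℝ) : ℂ)⁻¹ ^ 2) ^ 2 := by ring
    rw [e, aux_c2']; norm_num
  rw [h4]
  ring

private lemma swapProj_add (ψ : Fin 2 × Fin 2 → ℂ)
    (M N : Matrix ((Fin 2 × Fin 2) × (Fin 2 × Fin 2)) ((Fin 2 × Fin 2) × (Fin 2 × Fin 2)) ℂ) :
    swapProj ψ (M + N) = swapProj ψ M + swapProj ψ N := by
  funext p q
  simp [swapProj, Matrix.add_apply, mul_add, add_mul, Finset.sum_add_distrib]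

private lemma swapProj_smul (ψ : Fin 2 × Fin 2 → ℂ) (c : ℂ)
    (M : Matrix ((Fin 2 × Fin 2) × (Fin 2 × Fin 2)) ((Fin 2 × Fin 2) × (Fin 2 × Fin 2)) ℂ) :
    swapProj ψ (c • M) = c • swapProj ψ M := by
  funext p q
  simp only [swapProj, Matrix.smul_apply, smul_eq_mul, Pi.smul_apply]
  rw [Finset.mul_sum]
  refine Finset.sum_congr rfl fun a₁ _ => ?_
  rw [Finset.mul_sum]
  refine Finset.sum_congr rfl fun a₂ _ => ?_
  rw [Finset.mul_sum]
  refine Finset.sum_congr rfl fun a₃ _ => ?_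
  rw [Finset.mul_sum]
  refine Finset.sum_congr rfl fun a₄ _ => ?_
  ring

private lemma braket2_add {n : Type*} [Fintype n] (φ ψ : n → ℂ) (M N : Matrix n n ℂ) :
    braket2 φ (M + N) ψ = braket2 φ M ψ + braket2 φ N ψ := by
  simp [braket2, Matrix.add_mulVec, dotProduct_add]

private lemma braket2_smul {n : Type*} [Fintype n] (φ ψ : n → ℂ) (c : ℂ) (M : Matrix n n ℂ) :
    braket2 φ (c • M) ψ = c * braket2 φ M ψ := by
  simp [braket2, Matrix.smul_mulVec, dotProduct_smul]

private lemma swapProb_add (i j : Fin 2)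
    (M N : Matrix ((Fin 2 × Fin 2) × (Fin 2 × Fin 2)) ((Fin 2 × Fin 2) × (Fin 2 × Fin 2)) ℂ) :
    swapProb i j (M + N) = swapProb i j M + swapProb i j N := by
  simp [swapProb, swapProj_add, Matrix.trace_add]

private lemma swapProb_smul (i j : Fin 2) (c : ℂ)
    (M : Matrix ((Fin 2 × Fin 2) × (Fin 2 × Fin 2)) ((Fin 2 × Fin 2) × (Fin 2 × Fin 2)) ℂ) :
    swapProb i j (c • M) = c * swapProb i j M := by
  simp [swapProb, swapProj_smul, Matrix.trace_smul]

private lemma swapNum_add (i j : Fin 2)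
    (M N : Matrix ((Fin 2 × Fin 2) × (Fin 2 × Fin 2)) ((Fin 2 × Fin 2) × (Fin 2 × Fin 2)) ℂ) :
    swapNum i j (M + N) = swapNum i j M + swapNum i j N := by
  simp [swapNum, swapProj_add, braket2_add]

private lemma swapNum_smul (i j : Fin 2) (c : ℂ)
    (M : Matrix ((Fin 2 × Fin 2) × (Fin 2 × Fin 2)) ((Fin 2 × Fin 2) × (Fin 2 × Fin 2)) ℂ) :
    swapNum i j (c • M) = c * swapNum i j M := by
  simp [swapNum, swapProj_smul, braket2_smul]

/-- The isometry-like matrix used to express `swapProj` as a conjugation. -/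
private def pmat (ψ : Fin 2 × Fin 2 → ℂ) :
    Matrix ((Fin 2 × Fin 2) × (Fin 2 × Fin 2)) (Fin 2 × Fin 2) ℂ :=
  fun r p => if r.1.1 = p.1 ∧ r.2.2 = p.2 then ψ (r.1.2, r.2.1) else 0

private lemma swapProj_conj (ψ : Fin 2 × Fin 2 → ℂ)
    (M : Matrix ((Fin 2 × Fin 2) × (Fin 2 × Fin 2)) ((Fin 2 × Fin 2) × (Fin 2 × Fin 2)) ℂ) :
    swapProj ψ M = (pmat ψ)ᴴ * M * pmat ψ := by
  funext p q
  simp only [swapProj, pmat, Matrix.mul_apply, Matrix.conjTranspose_apply,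
    Fintype.sum_prod_type, Fin.sum_univ_two]
  fin_cases p <;> fin_cases q <;>
  · simp
    ring

private lemma kron_conjT (A B : Matrix (Fin 2 × Fin 2) (Fin 2 × Fin 2) ℂ) :
    (A ⊗ₖ B)ᴴ = Aᴴ ⊗ₖ Bᴴ := by
  ext x y
  simp [Matrix.conjTranspose_apply, Matrix.kroneckerMap_apply, mul_comm]

private lemma mat_zero_of_trace {m n : Type*} [Fintype m] [Fintype n] [DecidableEq n]
    (C : Matrix m n ℂ) (h : (Cᴴ * C).trace = 0) : C = 0 := by
  have htr : (Cᴴ * C).trace = ((∑ j, ∑ i, Complex.normSq (C i j) : ℝ) : ℂ) := by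
    push_cast
    simp only [Matrix.trace, Matrix.diag, Matrix.mul_apply, Matrix.conjTranspose_apply,
      RCLike.star_def]
    refine Finset.sum_congr rfl fun a _ => Finset.sum_congr rfl fun b _ => ?_
    rw [Complex.normSq_eq_conj_mul_self]
  rw [htr, Complex.ofReal_eq_zero] at h
  have h' := (Finset.sum_eq_zero_iff_of_nonneg (fun a _ =>
    Finset.sum_nonneg fun b _ => Complex.normSq_nonneg _)).mp h
  ext a b
  have h'' := (Finset.sum_eq_zero_iff_of_nonneg (fun x _ => Complex.normSq_nonneg _)).mp
    (h' b (Finset.mem_univ _)) a (Finset.mem_univ _)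
  simpa using Complex.normSq_eq_zero.mp h''

private lemma swapNum_zero_of_prob_zero (i j : Fin 2)
    (σ₁ σ₂ : Matrix (Fin 2 × Fin 2) (Fin 2 × Fin 2) ℂ)
    (h₁ : σ₁.PosSemidef) (h₂ : σ₂.PosSemidef)
    (h : swapProb i j (σ₁ ⊗ₖ σ₂) = 0) : swapNum i j (σ₁ ⊗ₖ σ₂) = 0 := by
  obtain ⟨B₁, rfl⟩ : ∃ B : Matrix (Fin 2 × Fin 2) (Fin 2 × Fin 2) ℂ, σ₁ = Bᴴ * B := by
    open scoped MatrixOrder Matrix.Norms.L2Operator in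
    exact CStarAlgebra.nonneg_iff_eq_star_mul_self.mp h₁.nonneg
  obtain ⟨B₂, rfl⟩ : ∃ B : Matrix (Fin 2 × Fin 2) (Fin 2 × Fin 2) ℂ, σ₂ = Bᴴ * B := by
    open scoped MatrixOrder Matrix.Norms.L2Operator in
    exact CStarAlgebra.nonneg_iff_eq_star_mul_self.mp h₂.nonneg
  have hk : (B₁ᴴ * B₁) ⊗ₖ (B₂ᴴ * B₂) = (B₁ ⊗ₖ B₂)ᴴ * (B₁ ⊗ₖ B₂) := by
    rw [kron_conjT, ← Matrix.mul_kronecker_mul]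
  have hsp : swapProj (bell i j) ((B₁ᴴ * B₁) ⊗ₖ (B₂ᴴ * B₂)) =
      ((B₁ ⊗ₖ B₂) * pmat (bell i j))ᴴ * ((B₁ ⊗ₖ B₂) * pmat (bell i j)) := by
    rw [swapProj_conj, hk, Matrix.conjTranspose_mul]
    simp only [Matrix.mul_assoc]
  have hD : (B₁ ⊗ₖ B₂) * pmat (bell i j) = 0 := by
    apply mat_zero_of_trace
    rw [← hsp]
    exact h
  rw [swapNum, hsp, hD]
  simp [braket2]

end Aux

/-- The family S_{p,F}: two-qubit states of the form p|Ψ₀₀⟩⟨Ψ₀₀| + (1−p)σ for some density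
matrix σ, with fidelity ⟨Ψ₀₀|ρ|Ψ₀₀⟩ = F. -/

def Spf (p F : ℝ) : Set (Matrix (Fin 2 × Fin 2) (Fin 2 × Fin 2) ℂ) :=
  {ρ | (∃ σ : Matrix (Fin 2 × Fin 2) (Fin 2 × Fin 2) ℂ, IsDensity σ ∧
      ρ = (p : ℂ) • bproj 0 0 + ((1 - p : ℝ) : ℂ) • σ) ∧
    braket2 (bell 0 0) ρ (bell 0 0) = (F : ℂ)}

/-- Fidelity formula for swapping noisy states
ρ_k = p|Ψ₀₀⟩⟨Ψ₀₀| + (1−p)σ_k of fidelity F: for each Bell outcome ij,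
p'_ij = p/2 − p²/4 + (1−p)² p̃'_ij and
F'_ij = (2pF − p² + 4(1−p)² p̃'_ij F̃'_ij) / (2p − p² + 4(1−p)² p̃'_ij),
where p̃'_ij, F̃'_ij are the swap statistics of σ₁ ⊗ σ₂. -/
theorem swap_noisy_states_formula (p F : ℝ) (i j : Fin 2)
    (σ₁ σ₂ : Matrix (Fin 2 × Fin 2) (Fin 2 × Fin 2) ℂ)
    (hσ₁ : IsDensity σ₁) (hσ₂ : IsDensity σ₂)
    (ρ₁ ρ₂ : Matrix (Fin 2 × Fin 2) (Fin 2 × Fin 2) ℂ)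
    (hρ₁ : ρ₁ = (p : ℂ) • bproj 0 0 + ((1 - p : ℝ) : ℂ) • σ₁)
    (hρ₂ : ρ₂ = (p : ℂ) • bproj 0 0 + ((1 - p : ℝ) : ℂ) • σ₂)
    (hF₁ : braket2 (bell 0 0) ρ₁ (bell 0 0) = (F : ℂ))
    (hF₂ : braket2 (bell 0 0) ρ₂ (bell 0 0) = (F : ℂ)) :
    swapProb i j (ρ₁ ⊗ₖ ρ₂) =
      (p : ℂ) / 2 - (p : ℂ) ^ 2 / 4 + ((1 : ℂ) - p) ^ 2 * swapProb i j (σ₁ ⊗ₖ σ₂) ∧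
    swapFid i j (ρ₁ ⊗ₖ ρ₂) =
      (2 * (p : ℂ) * (F : ℂ) - (p : ℂ) ^ 2 +
          4 * ((1 : ℂ) - p) ^ 2 * swapProb i j (σ₁ ⊗ₖ σ₂) * swapFid i j (σ₁ ⊗ₖ σ₂)) /
        (2 * (p : ℂ) - (p : ℂ) ^ 2 + 4 * ((1 : ℂ) - p) ^ 2 * swapProb i j (σ₁ ⊗ₖ σ₂)) := by
  have hb : ((1 - p : ℝ) : ℂ) = 1 - (p : ℂ) := by push_cast; ring
  have ht₁ : σ₁.trace = 1 := hσ₁.2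
  have ht₂ : σ₂.trace = 1 := hσ₂.2
  set a : ℂ := (p : ℂ) with ha
  set t := swapProb i j (σ₁ ⊗ₖ σ₂) with htdef
  set u := swapNum i j (σ₁ ⊗ₖ σ₂) with hudef
  set s₁ := braket2 (bell 0 0) σ₁ (bell 0 0) with hs₁def
  set s₂ := braket2 (bell 0 0) σ₂ (bell 0 0) with hs₂def
  have hkron : ρ₁ ⊗ₖ ρ₂ =
      (a * a) • (bproj 0 0 ⊗ₖ bproj 0 0) + (a * (1 - a)) • (bproj 0 0 ⊗ₖ σ₂)
        + ((1 - a) * a) • (σ₁ ⊗ₖ bproj 0 0) + ((1 - a) * (1 - a)) • (σ₁ ⊗ₖ σ₂) := by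
    rw [hρ₁, hρ₂, hb]
    simp only [Matrix.add_kronecker, Matrix.kronecker_add, Matrix.smul_kronecker,
      Matrix.kronecker_smul, smul_smul, smul_add, add_smul]
    module
  have hD : swapProb i j (ρ₁ ⊗ₖ ρ₂) =
      a * a * (1 / 4) + a * (1 - a) * (1 / 4) + (1 - a) * a * (1 / 4) + (1 - a) * (1 - a) * t := by
    rw [hkron, swapProb_add, swapProb_add, swapProb_add, swapProb_smul, swapProb_smul,
      swapProb_smul, swapProb_smul, swapProb_PL, swapProb_PL, swapProb_LP, trace_bproj,
      ht₁, ht₂]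
    try ring
  have hN : swapNum i j (ρ₁ ⊗ₖ ρ₂) =
      a * a * (1 / 4) + a * (1 - a) * (s₂ / 4) + (1 - a) * a * (s₁ / 4)
        + (1 - a) * (1 - a) * u := by
    rw [hkron, swapNum_add, swapNum_add, swapNum_add, swapNum_smul, swapNum_smul,
      swapNum_smul, swapNum_smul, swapNum_PL, swapNum_PL, swapNum_LP, braket_bproj]
    try ring
  have hs₁ : a + (1 - a) * s₁ = (F : ℂ) := by
    rw [← hF₁, hρ₁, braket2_add, braket2_smul, braket2_smul, braket_bproj, hb, ← hs₁def]
    ring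
  have hs₂ : a + (1 - a) * s₂ = (F : ℂ) := by
    rw [← hF₂, hρ₂, braket2_add, braket2_smul, braket2_smul, braket_bproj, hb, ← hs₂def]
    ring
  have hu : t * (u / t) = u := by
    by_cases ht : t = 0
    · have hu0 : u = 0 := swapNum_zero_of_prob_zero i j σ₁ σ₂ hσ₁.1 hσ₂.1 ht
      rw [ht, hu0]
      ring
    · field_simp
  constructor
  · rw [hD]; ring
  · have e2 : 2 * a - a ^ 2 + 4 * ((1 : ℂ) - a) ^ 2 * t = 4 * swapProb i j (ρ₁ ⊗ₖ ρ₂) := by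
      rw [hD]; ring
    have e1 : 2 * a * (F : ℂ) - a ^ 2 + 4 * ((1 : ℂ) - a) ^ 2 * t * (u / t) =
        4 * swapNum i j (ρ₁ ⊗ₖ ρ₂) := by
      rw [show 4 * ((1 : ℂ) - a) ^ 2 * t * (u / t) = 4 * ((1 : ℂ) - a) ^ 2 * (t * (u / t)) by
        ring, hu, hN]
      linear_combination (-a) * hs₁ - a * hs₂
    have hfid : swapFid i j (σ₁ ⊗ₖ σ₂) = u / t := rfl
    rw [hfid, e1, e2, swapFid, mul_div_mul_left _ _ (by norm_num : (4 : ℂ) ≠ 0)]
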